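/- Suppose D : R^n × R^n ⇉ R^m satisfies the conservativity chain rule: for every absolutely continuous curve γ : [0,1] → R^n, the equality {d/dt (F∘γ)(t)} = D(γ(t), γ'(t)) holds for a.e. t ∈ (0,1), where F : R^n → R^m is locally Lipschitz. Then for every absolutely continuous curve γ : [0,1] → R^n, the equality D(γ(t), γ'(t)) = -D(γ(t), -γ'(t)) holds for a.e. t ∈ (0,1). -/

import Mathlib

open Filter Topology MeasureTheory

/-- A curve `γ : ℝ → E` is absolutely continuous on `[0,1]` iff it is the indefinite
integral of an integrable function (the standard characterization). -/
def AbsolutelyContinuousOn01 {E : Type*} [NormedAddCommGroup E] [NormedSpace ℝ E]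
    (γ : ℝ → E) : Prop :=
  ∃ g : ℝ → E, IntegrableOn g (Set.Icc 0 1) ∧
    ∀ t ∈ Set.Icc (0 : ℝ) 1, γ t = γ 0 + ∫ s in Set.Ioc 0 t, g s

/-- The time reversal of an absolutely continuous curve is absolutely continuous. -/
lemma AbsolutelyContinuousOn01.reverse {E : Type*} [NormedAddCommGroup E] [NormedSpace ℝ E]
    [CompleteSpace E] {γ : ℝ → E} (h : AbsolutelyContinuousOn01 γ) :
    AbsolutelyContinuousOn01 (fun t => γ (1 - t)) := by
  obtain ⟨g, hg, hgeq⟩ := h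
  have hg1 : IntervalIntegrable g volume 0 1 := by
    rw [intervalIntegrable_iff_integrableOn_Ioc_of_le (by norm_num)]
    exact hg.mono_set Set.Ioc_subset_Icc_self
  have htil : IntervalIntegrable (fun s => -g (1 - s)) volume 0 1 := by
    have := (hg1.comp_sub_left 1).neg
    exact (by simpa using this.symm : IntervalIntegrable (-fun x => g (1 - x)) volume 0 1)
  refine ⟨fun s => -g (1 - s), ?_, ?_⟩
  · rw [integrableOn_Icc_iff_integrableOn_Ioc]
    exact (intervalIntegrable_iff_integrableOn_Ioc_of_le (by norm_num)).mp htil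
  · intro t ht
    obtain ⟨ht0, ht1⟩ := ht
    have hmem : (1 - t) ∈ Set.Icc (0 : ℝ) 1 := ⟨by linarith, by linarith⟩
    have e1 : γ (1 - t) = γ 0 + ∫ s in Set.Ioc 0 (1 - t), g s := hgeq _ hmem
    have e2 : γ (1 - 0) = γ 0 + ∫ s in Set.Ioc (0:ℝ) 1, g s := by
      simpa using hgeq 1 ⟨by norm_num, le_refl 1⟩
    simp only [e1, e2]
    rw [← intervalIntegral.integral_of_le (by linarith : (0:ℝ) ≤ 1 - t),
        ← intervalIntegral.integral_of_le (by norm_num : (0:ℝ) ≤ 1),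
        ← intervalIntegral.integral_of_le ht0]
    have subst : (∫ s in (0:ℝ)..t, -g (1 - s)) = -∫ x in (1-t)..1, g x := by
      rw [intervalIntegral.integral_neg, intervalIntegral.integral_comp_sub_left g 1]
      norm_num
    have hadj : (∫ x in (0:ℝ)..(1-t), g x) + ∫ x in (1-t)..1, g x = ∫ x in (0:ℝ)..1, g x := by
      apply intervalIntegral.integral_add_adjacent_intervals
      · apply hg1.mono_set
        rw [Set.uIcc_of_le (by linarith : (0:ℝ) ≤ 1 - t), Set.uIcc_of_le (by norm_num : (0:ℝ) ≤ 1)]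
        exact Set.Icc_subset_Icc le_rfl (by linarith)
      · apply hg1.mono_set
        rw [Set.uIcc_of_le (by linarith : (1:ℝ) - t ≤ 1), Set.uIcc_of_le (by norm_num : (0:ℝ) ≤ 1)]
        exact Set.Icc_subset_Icc (by linarith) le_rfl
    rw [subst, ← hadj]
    abel

/-- If `D` satisfies the conservativity chain rule
`{d/dt (F ∘ γ)(t)} = D(γ t, γ'(t))` for a.e. `t ∈ (0,1)` along every absolutely
continuous curve `γ`, where `F` is locally Lipschitz, then for every absolutely
continuous curve `γ` the symmetry `D(γ t, γ'(t)) = -D(γ t, -γ'(t))` holds for a.e.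
`t ∈ (0,1)`. -/
theorem conservative_imp_symmetric {n m : ℕ}
    (F : EuclideanSpace ℝ (Fin n) → EuclideanSpace ℝ (Fin m))
    (hF : LocallyLipschitz F)
    (D : EuclideanSpace ℝ (Fin n) → EuclideanSpace ℝ (Fin n) → Set (EuclideanSpace ℝ (Fin m)))
    (hcons : ∀ γ : ℝ → EuclideanSpace ℝ (Fin n), AbsolutelyContinuousOn01 γ →
      ∀ᵐ t ∂(volume.restrict (Set.Ioo (0 : ℝ) 1)),
        DifferentiableAt ℝ γ t ∧ DifferentiableAt ℝ (F ∘ γ) t ∧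
          D (γ t) (deriv γ t) = {deriv (F ∘ γ) t}) :
    ∀ γ : ℝ → EuclideanSpace ℝ (Fin n), AbsolutelyContinuousOn01 γ →
      ∀ᵐ t ∂(volume.restrict (Set.Ioo (0 : ℝ) 1)),
        D (γ t) (deriv γ t) = -D (γ t) (-(deriv γ t)) := by
  intro γ hγ
  set α : ℝ → EuclideanSpace ℝ (Fin n) := fun t => γ (1 - t) with hα
  have h1 := hcons γ hγ
  have h2 := hcons α hγ.reverse
  rw [ae_restrict_iff' measurableSet_Ioo] at h1 h2 ⊢
  have hmp : MeasurePreserving (fun t : ℝ => 1 - t) volume volume :=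
    Measure.measurePreserving_sub_left volume 1
  have h2' := hmp.quasiMeasurePreserving.ae h2
  filter_upwards [h1, h2'] with t ht1 ht2 htmem
  obtain ⟨htm0, htm1⟩ := htmem
  have hmem' : (1 - t) ∈ Set.Ioo (0:ℝ) 1 := ⟨by linarith, by linarith⟩
  obtain ⟨_, _, hDγ⟩ := ht1 ⟨htm0, htm1⟩
  obtain ⟨_, _, hDα⟩ := ht2 hmem'
  have hα1 : α (1 - t) = γ t := by simp [hα]
  have hα2 : deriv α (1 - t) = -(deriv γ t) := by
    rw [hα, deriv_comp_const_sub γ 1]; norm_num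
  have hα3 : deriv (F ∘ α) (1 - t) = -(deriv (F ∘ γ) t) := by
    have : F ∘ α = fun u => (F ∘ γ) (1 - u) := rfl
    rw [this, deriv_comp_const_sub (F ∘ γ) 1]; norm_num
  rw [hα1, hα2, hα3] at hDα
  rw [hDγ, hDα, Set.neg_singleton, neg_neg]
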